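/- Let G be a connected threshold graph on n ≥ 4 vertices with c ≥ 3 type-1 vertices and BZP sequence b₁ ≥ ⋯ ≥ b_z (z ≥ 1, 1 ≤ b_i ≤ c−1), and let F₁ = ∑ b_i². Then the spectral radius ρ of G satisfies ρ > c − 1 + F₁/n². -/

import Mathlib

open Matrix in
lemma rayleigh_aux_tlb {m : Type*} [Fintype m] [DecidableEq m] {A : Matrix m m ℝ}
    (hA : A.IsHermitian) {ρ : ℝ} (hρ : ∀ i, |hA.eigenvalues i| ≤ ρ) (x : m → ℝ) :
    x ⬝ᵥ (A *ᵥ x) ≤ ρ * (x ⬝ᵥ x) := by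
  set U : Matrix m m ℝ := (hA.eigenvectorUnitary : Matrix m m ℝ) with hUdef
  have hU : U * star U = 1 := (Matrix.mem_unitaryGroup_iff).mp hA.eigenvectorUnitary.2
  set y : m → ℝ := star U *ᵥ x with hydef
  have hsU : star U = Uᵀ := by
    rw [Matrix.star_eq_conjTranspose, Matrix.conjTranspose_eq_transpose_of_trivial]
  have hdot : ∀ w : m → ℝ, x ⬝ᵥ (U *ᵥ w) = y ⬝ᵥ w := by
    intro w
    rw [dotProduct_mulVec, hydef, hsU, Matrix.mulVec_transpose]
  have hxy : x ⬝ᵥ x = y ⬝ᵥ y := by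
    have h1 : x ⬝ᵥ x = x ⬝ᵥ (U *ᵥ y) := by
      rw [hydef, Matrix.mulVec_mulVec, hU, Matrix.one_mulVec]
    rw [h1, hdot]
  have hq : x ⬝ᵥ (A *ᵥ x) = ∑ i, hA.eigenvalues i * (y i)^2 := by
    conv_lhs => rw [hA.spectral_theorem, Unitary.conjStarAlgAut_apply, ← hUdef]
    rw [← Matrix.mulVec_mulVec, ← Matrix.mulVec_mulVec, ← hydef, hdot]
    simp [dotProduct, Matrix.mulVec_diagonal]
    ring_nf
    exact Finset.sum_congr rfl fun i _ => mul_comm _ _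
  rw [hq, hxy]
  rw [dotProduct, Finset.mul_sum]
  apply Finset.sum_le_sum
  intro i _
  have := (le_abs_self _).trans (hρ i)
  nlinarith [sq_nonneg (y i)]

lemma sum_indicator_lt_tlb (c k : ℕ) (hk : k ≤ c) :
    ∑ a : Fin c, (if (a : ℕ) < k then (1:ℝ) else 0) = k := by
  rw [Fin.sum_univ_eq_sum_range (fun j => if j < k then (1:ℝ) else 0) c,
    Finset.sum_boole]
  congr 1
  rw [show (Finset.range c).filter (· < k) = Finset.range k by
    ext j; simp [Finset.mem_filter, Finset.mem_range]; omega]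
  simp

lemma double_split_tlb {c z : ℕ} (F : Fin (c+z) → Fin (c+z) → ℝ) :
    ∑ u, ∑ v, F u v =
      (∑ a : Fin c, ∑ a' : Fin c, F (Fin.castAdd z a) (Fin.castAdd z a'))
      + (∑ a : Fin c, ∑ i : Fin z, F (Fin.castAdd z a) (Fin.natAdd c i))
      + (∑ i : Fin z, ∑ a : Fin c, F (Fin.natAdd c i) (Fin.castAdd z a))
      + (∑ i : Fin z, ∑ j : Fin z, F (Fin.natAdd c i) (Fin.natAdd c j)) := by
  rw [Fin.sum_univ_add (f := fun u => ∑ v, F u v),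
    Finset.sum_congr rfl fun a _ => Fin.sum_univ_add (f := fun v => F (Fin.castAdd z a) v),
    Finset.sum_congr rfl fun i _ => Fin.sum_univ_add (f := fun v => F (Fin.natAdd c i) v),
    Finset.sum_add_distrib, Finset.sum_add_distrib]
  ring

/-- A connected threshold graph on `n = c + z ≥ 4` vertices, built from the
clique `K_c` (type-1 vertices) by attaching `z` type-0 vertices, the `i`-th of which is
joined to the first `b i` clique vertices (`1 ≤ b i ≤ c − 1`, BZP sequence nonincreasing),
has spectral radius `ρ > c − 1 + F₁/n²` where `F₁ = ∑ bᵢ²`. -/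
theorem threshold_lower_bound_lazy (c z : ℕ) (hc : 3 ≤ c) (hz : 1 ≤ z)
    (hn : 4 ≤ c + z)
    (b : Fin z → ℕ) (hb : ∀ i, 1 ≤ b i ∧ b i ≤ c - 1)
    (hmono : ∀ i j : Fin z, i ≤ j → b j ≤ b i)
    (G : SimpleGraph (Fin (c + z))) [DecidableRel G.Adj]
    (hG : ∀ u v : Fin (c + z), G.Adj u v ↔ u ≠ v ∧
      ((u.1 < c ∧ v.1 < c) ∨
       (u.1 < c ∧ c ≤ v.1 ∧ u.1 < b ⟨v.1 - c, by have := v.isLt; omega⟩) ∨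
       (v.1 < c ∧ c ≤ u.1 ∧ v.1 < b ⟨u.1 - c, by have := u.isLt; omega⟩)))
    (hconn : G.Connected)
    (ρ : ℝ) (hρ₁ : ρ ∈ spectrum ℝ (G.adjMatrix ℝ))
    (hρ₂ : ∀ μ ∈ spectrum ℝ (G.adjMatrix ℝ), |μ| ≤ ρ) :
    ρ > (c : ℝ) - 1 + (∑ i, (b i : ℝ) ^ 2) / ((c : ℝ) + z) ^ 2 := by
  classical
  -- setup real quantities
  set C : ℝ := (c : ℝ) with hCdef
  set Fs : ℝ := ∑ i, (b i : ℝ) ^ 2 with hFdef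
  set Nr : ℝ := C + (z : ℝ) with hNrdef
  have hC3 : (3:ℝ) ≤ C := by rw [hCdef]; exact_mod_cast hc
  have hZ1 : (1:ℝ) ≤ (z:ℝ) := by exact_mod_cast hz
  have hNpos : 0 < Nr := by rw [hNrdef]; linarith
  have hbC : ∀ i, (1:ℝ) ≤ (b i : ℝ) ∧ (b i : ℝ) ≤ C - 1 := by
    intro i
    constructor
    · exact_mod_cast (hb i).1
    · have h2 := (hb i).2
      have : (b i : ℝ) ≤ ((c - 1 : ℕ) : ℝ) := by exact_mod_cast h2
      rw [Nat.cast_sub (by omega)] at this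
      simpa using this
  have hFlow : (z : ℝ) ≤ Fs := by
    rw [hFdef]
    calc (z:ℝ) = ∑ _i : Fin z, (1:ℝ) := by simp
    _ ≤ ∑ i, (b i : ℝ)^2 := by
        apply Finset.sum_le_sum
        intro i _
        nlinarith [(hbC i).1]
  have hFpos : 0 < Fs := lt_of_lt_of_le (by linarith) hFlow
  have hFhigh : Fs ≤ (z : ℝ) * (C - 1)^2 := by
    rw [hFdef]
    calc ∑ i, (b i : ℝ)^2 ≤ ∑ _i : Fin z, (C-1)^2 := by
          apply Finset.sum_le_sum
          intro i _
          nlinarith [(hbC i).1, (hbC i).2]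
      _ = (z:ℝ) * (C-1)^2 := by simp [mul_comm]
  set ε : ℝ := Fs / Nr ^ 2 with hεdef
  have hεpos : 0 < ε := div_pos hFpos (by positivity)
  have hεz : ε < (z : ℝ) := by
    rw [hεdef, div_lt_iff₀ (by positivity)]
    have h1 : (C - 1)^2 < Nr^2 := by nlinarith
    nlinarith
  have hden : 0 < C - 1 + ε := by linarith
  set t : ℝ := 1 / (C - 1 + ε) with htdef
  have htpos : 0 < t := by positivity
  have htden : (C - 1 + ε) * t = 1 := by
    rw [htdef]; field_simp
  have hkey : C * (C - 1 + ε) < Nr^2 := by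
    have h1 : C * (C - 1 + ε) < C * (C - 1) + C * (z:ℝ) := by nlinarith
    nlinarith
  have htF : ε * C < t * Fs := by
    have h1 : ε * C = Fs * C / Nr^2 := by rw [hεdef]; ring
    have h2 : t * Fs = Fs / (C - 1 + ε) := by rw [htdef]; ring
    rw [h1, h2, div_lt_div_iff₀ (by positivity) hden]
    calc Fs * C * (C - 1 + ε) = Fs * (C * (C - 1 + ε)) := by ring
      _ < Fs * Nr^2 := mul_lt_mul_of_pos_left hkey hFpos
  -- the test vector
  set x : Fin (c + z) → ℝ :=
    fun v => if v.1 < c then 1 else t * (b ⟨v.1 - c, by have := v.isLt; omega⟩ : ℝ) with hxdef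
  have hxc : ∀ a : Fin c, x (Fin.castAdd z a) = 1 := by
    intro a; simp [hxdef, a.isLt]
  have hxi : ∀ i : Fin z, x (Fin.natAdd c i) = t * (b i : ℝ) := by
    intro i; simp [hxdef]
  have hAdj_cc : ∀ a a' : Fin c,
      G.Adj (Fin.castAdd z a) (Fin.castAdd z a') ↔ a ≠ a' := by
    intro a a'
    rw [hG]
    simp [Fin.ext_iff, a.isLt, a'.isLt]
  have hAdj_ci : ∀ (a : Fin c) (i : Fin z),
      G.Adj (Fin.castAdd z a) (Fin.natAdd c i) ↔ (a : ℕ) < b i := by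
    intro a i
    rw [hG]
    simp [Fin.ext_iff, a.isLt]
    omega
  have hAdj_ic : ∀ (i : Fin z) (a : Fin c),
      G.Adj (Fin.natAdd c i) (Fin.castAdd z a) ↔ (a : ℕ) < b i := by
    intro i a
    rw [hG]
    simp [Fin.ext_iff, a.isLt]
    omega
  have hAdj_ii : ∀ i j : Fin z, ¬ G.Adj (Fin.natAdd c i) (Fin.natAdd c j) := by
    intro i j
    rw [hG]
    simp
  -- norm of x
  have hN : dotProduct x x = C + t^2 * Fs := by
    simp only [dotProduct]
    rw [Fin.sum_univ_add (f := fun v => x v * x v)]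
    congr 1
    · rw [Finset.sum_congr rfl fun a _ => by rw [hxc a, mul_one]]
      simp [hCdef]
    · rw [Finset.sum_congr rfl fun i _ => by rw [hxi i], hFdef, Finset.mul_sum]
      exact Finset.sum_congr rfl fun i _ => by ring
  -- quadratic form
  have expand : dotProduct x (Matrix.mulVec (G.adjMatrix ℝ) x)
      = ∑ u, ∑ v, (if G.Adj u v then (1:ℝ) else 0) * (x u * x v) := by
    simp only [dotProduct, Matrix.mulVec, SimpleGraph.adjMatrix_apply, Finset.mul_sum]
    exact Finset.sum_congr rfl fun u _ => Finset.sum_congr rfl fun v _ => by ring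
  have hQ : dotProduct x (Matrix.mulVec (G.adjMatrix ℝ) x) = C * (C - 1) + 2 * (t * Fs) := by
    rw [expand, double_split_tlb (fun u v => (if G.Adj u v then (1:ℝ) else 0) * (x u * x v))]
    have hBlockA : (∑ a : Fin c, ∑ a' : Fin c,
        (if G.Adj (Fin.castAdd z a) (Fin.castAdd z a') then (1:ℝ) else 0)
          * (x (Fin.castAdd z a) * x (Fin.castAdd z a'))) = C * (C - 1) := by
      have hrow : ∀ a : Fin c, (∑ a' : Fin c,
          (if G.Adj (Fin.castAdd z a) (Fin.castAdd z a') then (1:ℝ) else 0)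
            * (x (Fin.castAdd z a) * x (Fin.castAdd z a'))) = C - 1 := by
        intro a
        have hterm : ∀ a' : Fin c,
            (if G.Adj (Fin.castAdd z a) (Fin.castAdd z a') then (1:ℝ) else 0)
              * (x (Fin.castAdd z a) * x (Fin.castAdd z a'))
            = 1 - (if a = a' then (1:ℝ) else 0) := by
          intro a'
          rw [hxc a, hxc a']
          by_cases h : a = a'
          · rw [if_neg (by simp [hAdj_cc, h]), if_pos h]; ring
          · rw [if_pos ((hAdj_cc a a').mpr h), if_neg h]; ring
        rw [Finset.sum_congr rfl fun a' _ => hterm a', Finset.sum_sub_distrib]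
        simp [hCdef, Finset.sum_ite_eq]
      rw [Finset.sum_congr rfl fun a _ => hrow a, Finset.sum_const, Finset.card_univ]
      simp [hCdef, nsmul_eq_mul]
    have hBlockB : (∑ a : Fin c, ∑ i : Fin z,
        (if G.Adj (Fin.castAdd z a) (Fin.natAdd c i) then (1:ℝ) else 0)
          * (x (Fin.castAdd z a) * x (Fin.natAdd c i))) = t * Fs := by
      rw [Finset.sum_comm]
      have hrow : ∀ i : Fin z, (∑ a : Fin c,
          (if G.Adj (Fin.castAdd z a) (Fin.natAdd c i) then (1:ℝ) else 0)
            * (x (Fin.castAdd z a) * x (Fin.natAdd c i))) = t * (b i : ℝ)^2 := by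
        intro i
        have hterm : ∀ a : Fin c,
            (if G.Adj (Fin.castAdd z a) (Fin.natAdd c i) then (1:ℝ) else 0)
              * (x (Fin.castAdd z a) * x (Fin.natAdd c i))
            = (t * (b i : ℝ)) * (if (a : ℕ) < b i then (1:ℝ) else 0) := by
          intro a
          rw [hxc a, hxi i]
          by_cases h : (a : ℕ) < b i
          · rw [if_pos ((hAdj_ci a i).mpr h), if_pos h]; ring
          · rw [if_neg (fun hh => h ((hAdj_ci a i).mp hh)), if_neg h]; ring
        rw [Finset.sum_congr rfl fun a _ => hterm a, ← Finset.mul_sum,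
          sum_indicator_lt_tlb c (b i) (by have := (hb i).2; omega)]
        ring
      rw [Finset.sum_congr rfl fun i _ => hrow i, hFdef, Finset.mul_sum]
    have hBlockC : (∑ i : Fin z, ∑ a : Fin c,
        (if G.Adj (Fin.natAdd c i) (Fin.castAdd z a) then (1:ℝ) else 0)
          * (x (Fin.natAdd c i) * x (Fin.castAdd z a))) = t * Fs := by
      have hrow : ∀ i : Fin z, (∑ a : Fin c,
          (if G.Adj (Fin.natAdd c i) (Fin.castAdd z a) then (1:ℝ) else 0)
            * (x (Fin.natAdd c i) * x (Fin.castAdd z a))) = t * (b i : ℝ)^2 := by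
        intro i
        have hterm : ∀ a : Fin c,
            (if G.Adj (Fin.natAdd c i) (Fin.castAdd z a) then (1:ℝ) else 0)
              * (x (Fin.natAdd c i) * x (Fin.castAdd z a))
            = (t * (b i : ℝ)) * (if (a : ℕ) < b i then (1:ℝ) else 0) := by
          intro a
          rw [hxc a, hxi i]
          by_cases h : (a : ℕ) < b i
          · rw [if_pos ((hAdj_ic i a).mpr h), if_pos h]; ring
          · rw [if_neg (fun hh => h ((hAdj_ic i a).mp hh)), if_neg h]; ring
        rw [Finset.sum_congr rfl fun a _ => hterm a, ← Finset.mul_sum,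
          sum_indicator_lt_tlb c (b i) (by have := (hb i).2; omega)]
        ring
      rw [Finset.sum_congr rfl fun i _ => hrow i, hFdef, Finset.mul_sum]
    have hBlockD : (∑ i : Fin z, ∑ j : Fin z,
        (if G.Adj (Fin.natAdd c i) (Fin.natAdd c j) then (1:ℝ) else 0)
          * (x (Fin.natAdd c i) * x (Fin.natAdd c j))) = 0 := by
      apply Finset.sum_eq_zero
      intro i _
      apply Finset.sum_eq_zero
      intro j _
      rw [if_neg (hAdj_ii i j), zero_mul]
    rw [hBlockA, hBlockB, hBlockC, hBlockD]
    ring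
  -- Rayleigh bound
  have hA : (G.adjMatrix ℝ).IsHermitian := by
    rw [Matrix.IsHermitian, Matrix.conjTranspose_eq_transpose_of_trivial]
    exact G.isSymm_adjMatrix
  have hray : dotProduct x (Matrix.mulVec (G.adjMatrix ℝ) x) ≤ ρ * (dotProduct x x) :=
    rayleigh_aux_tlb hA (fun i => hρ₂ _ (hA.eigenvalues_mem_spectrum_real i)) x
  -- final arithmetic
  have hNormPos : 0 < C + t^2 * Fs := by positivity
  have hQgt : C * (C - 1) + 2 * (t * Fs) > (C - 1 + ε) * (C + t^2 * Fs) := by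
    have hexp : (C - 1 + ε) * (C + t^2 * Fs)
        = C * (C - 1) + ε * C + ((C - 1 + ε) * t) * (t * Fs) := by ring
    rw [hexp, htden, one_mul]
    linarith
  have hfinal : (C - 1 + ε) * (C + t^2 * Fs) < ρ * (C + t^2 * Fs) := by
    calc (C - 1 + ε) * (C + t^2 * Fs) < C * (C - 1) + 2 * (t * Fs) := hQgt
      _ = dotProduct x (Matrix.mulVec (G.adjMatrix ℝ) x) := hQ.symm
      _ ≤ ρ * (dotProduct x x) := hray
      _ = ρ * (C + t^2 * Fs) := by rw [hN]
  have hlt : C - 1 + ε < ρ :=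
    lt_of_mul_lt_mul_right hfinal (le_of_lt hNormPos)
  exact hlt
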